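/- Fix v > 0. The function g: ℝ≥0 → ℝ defined by g(p) = max over distributions D on [0, v] of E_{t∼D}[(v - t)·1{t > p}] satisfies: the specific distribution with density 1/(v-t) on [0, (1-1/e)v] guarantees E[(v-t)·1{t>p}] ≥ (1-1/e)·v - p simultaneously for all p ≥ 0, and no single distribution can guarantee E[(v-t)·1{t>p}] ≥ c·v - p for all p ≥ 0 with constant c > 1 - 1/e. -/

import Mathlib

open Real MeasureTheory

private lemma part1 (v : ℝ) (hv : 0 < v) : ∀ p : ℝ, 0 ≤ p →
    ∫ t in Set.Ioo (0 : ℝ) ((1 - 1 / Real.exp 1) * v),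
        (if p < t then v - t else 0) * (1 / (v - t)) ≥
      (1 - 1 / Real.exp 1) * v - p := by
  intro p hp
  have he1 : (1:ℝ) < Real.exp 1 := by have := Real.exp_one_gt_d9; linarith
  have hep : (0:ℝ) < Real.exp 1 := by linarith
  set e := Real.exp 1 with hedef
  set B := (1 - 1 / e) * v with hBdef
  have hB0 : 0 < B := by
    have h1 : 1 / e < 1 := by rw [div_lt_one hep]; exact he1
    have : 0 < 1 - 1 / e := by linarith
    positivity
  have hBv : B < v := by
    have h1 : 0 < 1 / e := by positivity
    nlinarith
  have h1 : ∫ t in Set.Ioo (0:ℝ) B, (if p < t then v - t else 0) * (1 / (v - t))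
      = ∫ t in Set.Ioo (0:ℝ) B, Set.indicator (Set.Ioi p) (fun _ => (1:ℝ)) t := by
    apply setIntegral_congr_fun measurableSet_Ioo
    intro t ht
    have hne : v - t ≠ 0 := by have := ht.2; intro h; nlinarith
    show (if p < t then v - t else 0) * (1 / (v - t)) = (Set.Ioi p).indicator (fun _ => (1:ℝ)) t
    by_cases h : p < t
    · rw [if_pos h, Set.indicator_of_mem (Set.mem_Ioi.mpr h)]
      field_simp
    · rw [if_neg h, Set.indicator_of_notMem (by simpa using h), zero_mul]
  rw [ge_iff_le, h1, setIntegral_indicator measurableSet_Ioi]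
  have hset : Set.Ioo (0:ℝ) B ∩ Set.Ioi p = Set.Ioo p B := by
    ext x
    simp only [Set.mem_inter_iff, Set.mem_Ioo, Set.mem_Ioi]
    constructor
    · rintro ⟨⟨_, h2⟩, h3⟩; exact ⟨h3, h2⟩
    · rintro ⟨h1', h2⟩; exact ⟨⟨lt_of_le_of_lt hp h1', h2⟩, h1'⟩
  rw [hset, setIntegral_const, Real.volume_real_Ioo, smul_eq_mul, mul_one]
  exact le_max_left _ _


private lemma ftc_inv_sq (v m : ℝ) (hm : 0 ≤ m) (hmv : m < v) :
    ∫ p in Set.Ioo 0 m, ((v - p) ^ 2)⁻¹ = (v - m)⁻¹ - v⁻¹ := by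
  have hne : ∀ x ∈ Set.uIcc (0:ℝ) m, v - x ≠ 0 := by
    intro x hx
    rw [Set.uIcc_of_le hm] at hx
    intro h; nlinarith [hx.1, hx.2]
  have key : ∫ p in (0:ℝ)..m, ((v - p) ^ 2)⁻¹ = (v - m)⁻¹ - (v - 0)⁻¹ := by
    apply intervalIntegral.integral_eq_sub_of_hasDerivAt (f := fun p => (v - p)⁻¹)
    · intro x hx
      have h1 : HasDerivAt (fun p : ℝ => v - p) (-1) x := (hasDerivAt_id x).const_sub v
      have h3 := h1.inv (hne x hx)
      refine h3.congr_deriv ?_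
      field_simp
    · apply ContinuousOn.intervalIntegrable
      exact ((continuousOn_const.sub continuousOn_id).pow 2).inv₀
        fun x hx => pow_ne_zero 2 (hne x hx)
  rw [← integral_Ioc_eq_integral_Ioo, ← intervalIntegral.integral_of_le hm, key, sub_zero]

private lemma ftc_main (v c : ℝ) (hv : 0 < v) :
    ∫ p in Set.Ioo 0 ((1 - 1 / Real.exp 1) * v), (c * v - p) * ((v - p) ^ 2)⁻¹
      = 1 + (1 - c) * (1 - Real.exp 1) := by
  have he1 : (1:ℝ) < Real.exp 1 := by
    have := Real.exp_one_gt_d9; linarith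
  have hep : (0:ℝ) < Real.exp 1 := by linarith
  set e := Real.exp 1 with hedef
  set B := (1 - 1 / e) * v with hBdef
  have hB0 : 0 < B := by
    have h1 : 1 / e < 1 := by rw [div_lt_one hep]; exact he1
    have : 0 < 1 - 1 / e := by linarith
    positivity
  have hBv : B < v := by
    have h1 : 0 < 1 / e := by positivity
    nlinarith
  have hne : ∀ x ∈ Set.uIcc (0:ℝ) B, v - x ≠ 0 := by
    intro x hx
    rw [Set.uIcc_of_le hB0.le] at hx
    intro h; nlinarith [hx.1, hx.2]
  have key : ∫ p in (0:ℝ)..B, (c * v - p) * ((v - p) ^ 2)⁻¹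
      = (-Real.log (v - B) - (1 - c) * v * (v - B)⁻¹)
        - (-Real.log (v - 0) - (1 - c) * v * (v - 0)⁻¹) := by
    apply intervalIntegral.integral_eq_sub_of_hasDerivAt
      (f := fun p => -Real.log (v - p) - (1 - c) * v * (v - p)⁻¹)
    · intro x hx
      have hne' : v - x ≠ 0 := hne x hx
      have h1 : HasDerivAt (fun p : ℝ => v - p) (-1) x := (hasDerivAt_id x).const_sub v
      have h2 : HasDerivAt (fun p => Real.log (v - p)) ((-1) / (v - x)) x := h1.log hne'
      have h3 : HasDerivAt (fun p : ℝ => (v - p)⁻¹) (-(-1) / (v - x) ^ 2) x := h1.inv hne'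
      have h4 := h2.neg.sub (h3.const_mul ((1 - c) * v))
      refine h4.congr_deriv ?_
      field_simp
      ring
    · apply ContinuousOn.intervalIntegrable
      exact ((continuousOn_const.sub continuousOn_id).mul
        (((continuousOn_const.sub continuousOn_id).pow 2).inv₀
          fun x hx => pow_ne_zero 2 (hne x hx)))
  have hvB : v - B = v / e := by rw [hBdef]; ring
  rw [← integral_Ioc_eq_integral_Ioo, ← intervalIntegral.integral_of_le hB0.le, key, hvB,
    Real.log_div hv.ne' (Real.exp_ne_zero 1), hedef, Real.log_exp, sub_zero]
  field_simp
  ring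

private lemma part2 (v : ℝ) (hv : 0 < v) :
    ∀ (D : Measure ℝ), IsProbabilityMeasure D → D (Set.Icc 0 v)ᶜ = 0 →
      ∀ c : ℝ, 1 - 1 / Real.exp 1 < c →
        ¬ (∀ p : ℝ, 0 ≤ p →
          ∫ t, (if p < t then v - t else 0) ∂D ≥ c * v - p) := by
  intro D hprob hsupp c hc hguar
  have he1 : (1:ℝ) < Real.exp 1 := by have := Real.exp_one_gt_d9; linarith
  have hep : (0:ℝ) < Real.exp 1 := by linarith
  set e := Real.exp 1 with hedef
  set B := (1 - 1 / e) * v with hBdef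
  have hB0 : 0 < B := by
    have h1 : 1 / e < 1 := by rw [div_lt_one hep]; exact he1
    have : 0 < 1 - 1 / e := by linarith
    positivity
  have hBv : B < v := by
    have h1 : 0 < 1 / e := by positivity
    nlinarith
  set μ := volume.restrict (Set.Ioo (0:ℝ) B) with hμ
  haveI : IsFiniteMeasure μ := by
    constructor
    rw [hμ, Measure.restrict_apply_univ, Real.volume_Ioo]
    exact ENNReal.ofReal_lt_top
  have hres : D.restrict (Set.Icc 0 v) = D :=
    Measure.restrict_eq_self_of_ae_mem (ae_iff.mpr hsupp)
  have hae : ∀ᵐ t ∂D, t ∈ Set.Icc 0 v := ae_iff.mpr hsupp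
  set F : ℝ × ℝ → ℝ := fun q => (if q.1 < q.2 then v - q.2 else 0) * ((v - q.1) ^ 2)⁻¹
    with hF
  have hFmeas : Measurable F := by
    apply Measurable.mul
    · exact Measurable.ite (measurableSet_lt measurable_fst measurable_snd)
        (measurable_const.sub measurable_snd) measurable_const
    · exact ((measurable_const.sub measurable_fst).pow_const 2).inv
  have haebox : ∀ᵐ q ∂(μ.prod D), q ∈ Set.Ioo (0:ℝ) B ×ˢ Set.Icc (0:ℝ) v := by
    conv in μ.prod D => rw [← hres, hμ, Measure.prod_restrict]
    exact ae_restrict_mem (measurableSet_Ioo.prod measurableSet_Icc)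
  have hFint : Integrable F (μ.prod D) := by
    apply Integrable.mono' (integrable_const (v * ((v - B) ^ 2)⁻¹))
      hFmeas.aestronglyMeasurable
    filter_upwards [haebox] with q hq
    obtain ⟨hq1, hq2⟩ := hq
    have h1 : |if q.1 < q.2 then v - q.2 else 0| ≤ v := by
      rw [abs_le]
      constructor
      · split_ifs with h
        · linarith [hq2.2]
        · linarith
      · split_ifs with h
        · linarith [hq2.1]
        · linarith
    have h2 : ((v - q.1) ^ 2)⁻¹ ≤ ((v - B) ^ 2)⁻¹ := by
      apply inv_anti₀ (by nlinarith [hq1.2]) (by nlinarith [hq1.1, hq1.2])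
    have h0 : (0:ℝ) ≤ ((v - q.1) ^ 2)⁻¹ := by positivity
    rw [Real.norm_eq_abs, abs_mul, abs_of_nonneg h0]
    apply mul_le_mul h1 h2 h0 hv.le
  -- lower bound
  have hL : (1 : ℝ) + (1 - c) * (1 - e) ≤ ∫ p, (∫ t, F (p, t) ∂D) ∂μ := by
    rw [← ftc_main v c hv]
    apply setIntegral_mono_on
    · apply IntegrableOn.mono_set (t := Set.Icc (0:ℝ) B) _ Set.Ioo_subset_Icc_self
      apply ContinuousOn.integrableOn_Icc
      apply (continuousOn_const.sub continuousOn_id).mul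
      apply ((continuousOn_const.sub continuousOn_id).pow 2).inv₀
      intro x hx h
      simp only [Pi.pow_apply, Pi.sub_apply, id_eq] at h
      nlinarith [hx.1, hx.2]
    · exact hFint.integral_prod_left
    · exact measurableSet_Ioo
    · intro p hp
      have hg := hguar p hp.1.le
      have : ∫ t, F (p, t) ∂D = (∫ t, (if p < t then v - t else 0) ∂D) * ((v - p) ^ 2)⁻¹ := by
        show ∫ t, (if p < t then v - t else 0) * ((v - p) ^ 2)⁻¹ ∂D = _
        exact integral_mul_const _ _
      rw [this]
      apply mul_le_mul_of_nonneg_right hg (by positivity)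
  -- Fubini
  have hswap : ∫ p, (∫ t, F (p, t) ∂D) ∂μ = ∫ t, (∫ p, F (p, t) ∂μ) ∂D :=
    integral_integral_swap hFint
  -- integrability of f 0
  have hf0meas : Measurable (fun t : ℝ => if 0 < t then v - t else 0) := by
    apply Measurable.ite measurableSet_Ioi (measurable_const.sub measurable_id) measurable_const
  have hf0int : Integrable (fun t : ℝ => if 0 < t then v - t else 0) D := by
    apply Integrable.mono' (integrable_const v) hf0meas.aestronglyMeasurable
    filter_upwards [hae] with t ht
    rw [Real.norm_eq_abs, abs_le]
    constructor
    · split_ifs with h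
      · linarith [ht.2]
      · linarith
    · split_ifs with h
      · linarith [ht.1]
      · linarith
  -- upper bound
  have hU : ∫ t, (∫ p, F (p, t) ∂μ) ∂D
      ≤ ∫ t, (1 - (if 0 < t then v - t else 0) * v⁻¹) ∂D := by
    apply integral_mono_ae hFint.integral_prod_right
      ((integrable_const 1).sub (hf0int.mul_const v⁻¹))
    filter_upwards [hae] with t ht
    have hinner : ∫ p, F (p, t) ∂μ
        = (v - t) * ((v - min B t)⁻¹ - v⁻¹) := by
      have hcongr : ∫ p, F (p, t) ∂μ
          = ∫ p in Set.Ioo (0:ℝ) B,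
              Set.indicator (Set.Iio t) (fun p => (v - t) * ((v - p) ^ 2)⁻¹) p := by
        rw [hμ]
        apply setIntegral_congr_fun measurableSet_Ioo
        intro p _
        show (if p < t then v - t else 0) * ((v - p) ^ 2)⁻¹ = _
        by_cases h : p < t
        · rw [if_pos h, Set.indicator_of_mem (Set.mem_Iio.mpr h)]
        · rw [if_neg h, Set.indicator_of_notMem (by simpa using h), zero_mul]
      rw [hcongr, setIntegral_indicator measurableSet_Iio]
      have hset : Set.Ioo (0:ℝ) B ∩ Set.Iio t = Set.Ioo 0 (min B t) := by
        ext x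
        simp only [Set.mem_inter_iff, Set.mem_Ioo, Set.mem_Iio, lt_min_iff]
        tauto
      rw [hset, integral_const_mul, ftc_inv_sq v (min B t) (le_min hB0.le ht.1)
        (lt_of_le_of_lt (min_le_left _ _) hBv)]
    simp only [Pi.sub_apply]
    rw [hinner]
    set m := min B t with hm
    have hmt : m ≤ t := min_le_right _ _
    have hmv : 0 < v - m := by
      have : m ≤ B := min_le_left _ _
      linarith
    have h3 : (v - t) * (v - m)⁻¹ ≤ 1 := by
      rw [← div_eq_mul_inv, div_le_one hmv]
      linarith
    have h4 : (if 0 < t then v - t else 0) ≤ v - t := by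
      split_ifs <;> linarith [ht.2]
    have h5 : (if 0 < t then v - t else 0) * v⁻¹ ≤ (v - t) * v⁻¹ :=
      mul_le_mul_of_nonneg_right h4 (by positivity)
    have hexp : (v - t) * ((v - m)⁻¹ - v⁻¹) = (v - t) * (v - m)⁻¹ - (v - t) * v⁻¹ := by
      ring
    linarith [hexp]
  -- compute RHS
  have hRHS : ∫ t, (1 - (if 0 < t then v - t else 0) * v⁻¹) ∂D ≤ 1 - c := by
    rw [integral_sub (integrable_const 1) (hf0int.mul_const v⁻¹),
      integral_const, integral_mul_const, probReal_univ, smul_eq_mul,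
      mul_one]
    have hg0 := hguar 0 le_rfl
    rw [ge_iff_le, sub_zero] at hg0
    have : c = c * v * v⁻¹ := by field_simp
    nlinarith [mul_le_mul_of_nonneg_right hg0 (inv_nonneg.mpr hv.le)]
  have hfinal : (1 : ℝ) + (1 - c) * (1 - e) ≤ 1 - c := by
    calc (1 : ℝ) + (1 - c) * (1 - e) ≤ ∫ p, (∫ t, F (p, t) ∂D) ∂μ := hL
    _ = ∫ t, (∫ p, F (p, t) ∂μ) ∂D := hswap
    _ ≤ ∫ t, (1 - (if 0 < t then v - t else 0) * v⁻¹) ∂D := hU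
    _ ≤ 1 - c := hRHS
  -- contradiction: c * e ≤ e - 1 but c > 1 - 1/e means c * e > e - 1
  have h6 : c * e ≤ e - 1 := by nlinarith
  have h7 : (1 - 1 / e) * e = e - 1 := by field_simp
  nlinarith [mul_lt_mul_of_pos_right hc hep]

theorem optimal_bid_distribution (v : ℝ) (hv : 0 < v) :
    (∀ p : ℝ, 0 ≤ p →
      ∫ t in Set.Ioo (0 : ℝ) ((1 - 1 / Real.exp 1) * v),
          (if p < t then v - t else 0) * (1 / (v - t)) ≥
        (1 - 1 / Real.exp 1) * v - p) ∧
    ∀ (D : Measure ℝ), IsProbabilityMeasure D → D (Set.Icc 0 v)ᶜ = 0 →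
      ∀ c : ℝ, 1 - 1 / Real.exp 1 < c →
        ¬ (∀ p : ℝ, 0 ≤ p →
          ∫ t, (if p < t then v - t else 0) ∂D ≥ c * v - p) :=
  ⟨part1 v hv, part2 v hv⟩
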